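/- Let U be a unification system and θ an idempotent most general unifier of U with vars(img(θ)) ⊆ vars(U). Then for every term p ∈ Sub(img(θ)) there exists a term q ∈ Sub(U) such that p = qθ. -/

import Mathlib

/-! ### Terms -/

/-- First-order terms: variables, ordinary constants, nonces (an infinite
subset of the constants), and function applications. -/
inductive Term : Type
  | var : ℕ → Term
  | cst : ℕ → Term
  | nonce : ℕ → Term
  | func : ℕ → List Term → Term

namespace Term

/-- The subterm relation. -/
inductive IsSubterm : Term → Term → Prop
  | refl (t : Term) : IsSubterm t t
  | func {s t : Term} {f : ℕ} {args : List Term} :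
      t ∈ args → IsSubterm s t → IsSubterm s (func f args)

/-- The set of subterms of a term. -/
def sub (t : Term) : Set Term := {s | IsSubterm s t}

/-- The set of (indices of) variables of a term. -/
def varsSet (t : Term) : Set ℕ := {x | IsSubterm (var x) t}

/-- A term is ground if it has no variables. -/
def Ground (t : Term) : Prop := varsSet t = ∅

/-- The term is a variable. -/
def IsVar : Term → Prop
  | var _ => True
  | _ => False

/-- Application of a substitution to a term. -/
noncomputable def subst (σ : ℕ → Term) : Term → Term
  | var x => σ x
  | cst c => cst c
  | nonce n => nonce n
  | func f args => func f (args.attach.map (fun a => Term.subst σ a.1))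
decreasing_by
  have := List.sizeOf_lt_of_mem a.2
  simp only [Term.func.sizeOf_spec]
  omega

/-- The function symbol `f` occurs in the term `t`. -/
def OccursFun (f : ℕ) (t : Term) : Prop := ∃ args, IsSubterm (func f args) t

end Term

/-! ### Substitutions -/

/-- Substitutions (maps from variables to terms). -/
abbrev Subst := ℕ → Term

namespace Subst

/-- The domain of a substitution. -/
def dom (σ : Subst) : Set ℕ := {x | σ x ≠ .var x}

/-- The image of a substitution. -/
def img (σ : Subst) : Set Term := {t | ∃ x ∈ dom σ, σ x = t}

/-- Idempotency of a substitution. -/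
def Idem (σ : Subst) : Prop := ∀ x, (σ x).subst σ = σ x

/-- A substitution is ground if its image consists of ground terms. -/
def IsGround (σ : Subst) : Prop := ∀ x ∈ dom σ, (σ x).Ground

open Classical in
/-- Union of two substitutions (intended for disjoint domains). -/
noncomputable def union (σ τ : Subst) : Subst := fun x =>
  if σ x = Term.var x then τ x else σ x

end Subst

/-- Subterms of a set of terms. -/
def subT (T : Set Term) : Set Term := {s | ∃ t ∈ T, Term.IsSubterm s t}

/-- Variables of a set of terms. -/
def varsT (T : Set Term) : Set ℕ := {x | ∃ t ∈ T, Term.IsSubterm (.var x) t}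

/-- DAG size of a set of terms: number of its subterms. -/
noncomputable def sizeT (T : Set Term) : ℕ := (subT T).ncard

/-- Size of a substitution: DAG size of its image. -/
noncomputable def sizeSubst (σ : Subst) : ℕ := sizeT σ.img

/-! ### Deduction systems, steps and derivations -/

/-- A deduction system: a finite set of (standard) deduction rules, each rule
being a pair (left-hand sides, right-hand side) whose right-hand-side variables
occur in the left-hand sides.  Nonce-creation rules and reception rules are
built into the notions of steps/derivations below. -/
structure DeductionSystem where
  rules : Set (List Term × Term)
  finite : rules.Finite
  wf : ∀ p ∈ rules, p.2.varsSet ⊆ varsT {u | u ∈ p.1}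

/-- A step of a derivation: a reception `? → t` or a standard deduction `l → r`
(nonce creations are standard deductions with empty left-hand side). -/
inductive Step
  | recv : Term → Step
  | std : List Term → Term → Step

namespace Step

/-- Right-hand side of a step. -/
def rhs : Step → Term
  | recv t => t
  | std _ r => r

/-- All terms occurring in the step. -/
def terms : Step → Set Term
  | recv t => {t}
  | std l r => {r} ∪ {u | u ∈ l}

end Step

/-- The set of right-hand sides of the first `k` steps of `D`. -/
def RHSset (D : List Step) (k : ℕ) : Set Term :=
  {r | ∃ j < k, ∃ s, D[j]? = some s ∧ s.rhs = r}

/-- A step is a deduction of the system `DS`: a reception of a ground term, a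
nonce creation, or a ground instance of a (standard) rule of `DS`. -/
def IsDeduction (DS : DeductionSystem) (s : Step) : Prop :=
  match s with
  | .recv t => t.Ground
  | .std l r =>
      (∀ u ∈ l, u.Ground) ∧ r.Ground ∧
        ((l = [] ∧ ∃ n, r = Term.nonce n) ∨
          ∃ p ∈ DS.rules, ∃ σ : Subst,
            l = p.1.map (Term.subst σ) ∧ r = p.2.subst σ)

/-- A derivation: a sequence of deductions in which the left-hand side of every
standard step has already been deduced. -/
def IsDerivation (DS : DeductionSystem) (D : List Step) : Prop :=
  (∀ s ∈ D, IsDeduction DS s) ∧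
  ∀ (i : ℕ) (l : List Term) (r : Term), D[i]? = some (Step.std l r) → ∀ u ∈ l, u ∈ RHSset D i

/-- The position of the first reception of `D` at index `≥ k` (or `|D|` if
there is none): (0-indexed version of) `Next(D, ·)`. -/
noncomputable def nextRecv (D : List Step) (k : ℕ) : ℕ :=
  sInf ({D.length} ∪ {j | k ≤ j ∧ ∃ t, D[j]? = some (Step.recv t)})

/-- `Der DS K`: the set of ground terms derivable from the knowledge `K`. -/
def Der (DS : DeductionSystem) (K : Set Term) : Set Term :=
  {t | ∃ D : List Step, IsDerivation DS D ∧
        (∀ (j : ℕ) (u : Term), D[j]? = some (Step.recv u) → u ∈ K) ∧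
        ∃ l, D.getLast? = some (Step.std l t)}

/-- No term is deduced twice in `D` by a standard rule. -/
def NoDuplicateStd (D : List Step) : Prop :=
  ∀ (i j : ℕ) (li lj : List Term) (r : Term), D[i]? = some (Step.std li r) → D[j]? = some (Step.std lj r) → i = j

/-- `(T,σ)`-maximality of a derivation. -/
def MaximalDeriv (DS : DeductionSystem) (T : Set Term) (σ : Subst) (D : List Step) : Prop :=
  ∀ t ∈ subT T, ∀ k ≤ D.length,
    t.subst σ ∈ Der DS (RHSset D k) → t.subst σ ∈ RHSset D (nextRecv D k)

/-! ### Constraint systems -/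

/-- A constraint: a reception `?t`, an emission `!t` or a negative
constraint `♮t`. -/
inductive Constraint
  | recv : Term → Constraint
  | send : Term → Constraint
  | neg : Term → Constraint

namespace Constraint

/-- The term of a constraint. -/
def term : Constraint → Term
  | recv t => t
  | send t => t
  | neg t => t

/-- The constraint is a send constraint. -/
def isSend : Constraint → Bool
  | send _ => true
  | _ => false

/-- Apply a substitution to a constraint. -/
noncomputable def map (θ : Subst) : Constraint → Constraint
  | recv t => recv (t.subst θ)
  | send t => send (t.subst θ)
  | neg t => neg (t.subst θ)

end Constraint

/-- A (pre-)constraint system is a finite sequence of constraints. -/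
abbrev CSystem := List Constraint

/-- The terms of a constraint system. -/
def csTerms (S : CSystem) : Set Term := {t | ∃ c ∈ S, c.term = t}

/-- `Sub(S)`. -/
def csSub (S : CSystem) : Set Term := subT (csTerms S)

/-- `vars(S)`. -/
def csVars (S : CSystem) : Set ℕ := varsT (csTerms S)

/-- `|Sub(S)|`. -/
noncomputable def csSize (S : CSystem) : ℕ := sizeT (csTerms S)

/-- Apply a substitution to all constraints of a system. -/
noncomputable def csSubst (S : CSystem) (θ : Subst) : CSystem := S.map (Constraint.map θ)

/-- Origination and determination: `S` is a genuine constraint system. -/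
def IsCS (S : CSystem) : Prop :=
  (∀ (i : ℕ) (t : Term), S[i]? = some (Constraint.send t) →
      t.varsSet ⊆ {x | ∃ j < i, ∃ u : Term, S[j]? = some (Constraint.recv u) ∧ x ∈ u.varsSet}) ∧
  (∀ (i : ℕ) (t : Term), S[i]? = some (Constraint.neg t) →
      t.varsSet ⊆ {x | ∃ (j : ℕ) (u : Term), S[j]? = some (Constraint.recv u) ∧ x ∈ u.varsSet})

/-- The knowledge produced by the send constraints up to (and including) index
`i`, instantiated by `σ` (this is `{tⱼσ : j ≤ prev(i), S[j] = !tⱼ}`). -/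
def knowledge (S : CSystem) (σ : Subst) (i : ℕ) : Set Term :=
  {u | ∃ j ≤ i, ∃ t, S[j]? = some (Constraint.send t) ∧ u = t.subst σ}

/-- A solution of a constraint system. -/
structure IsSolution (DS : DeductionSystem) (S : CSystem) (σ : Subst) : Prop where
  ground : σ.IsGround
  idem : σ.Idem
  dom_eq : σ.dom = csVars S
  recv_mem : ∀ (i : ℕ) (t : Term), S[i]? = some (Constraint.recv t) → t.subst σ ∈ Der DS (knowledge S σ i)
  neg_not_mem : ∀ (i : ℕ) (t : Term), S[i]? = some (Constraint.neg t) → t.subst σ ∉ Der DS (knowledge S σ i)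

/-- `prev(i)`: the last send index `≤ i` of `S`, if any. -/
def prevSend (S : CSystem) (i : ℕ) : Option ℕ :=
  ((List.range (i + 1)).filter (fun j => ((S[j]?).map Constraint.isSend).getD false)).max?

/-- `(S,σ)`-compliance of a derivation `D` with the mapping `α`: `α` is a
strictly increasing bijection from the send indices of `S` onto the reception
positions of `D`, sending `!t` to the reception `? → tσ`. -/
structure Compliant (S : CSystem) (σ : Subst) (D : List Step) (α : ℕ → ℕ) : Prop where
  mono : ∀ (i j : ℕ) (ti tj : Term), S[i]? = some (Constraint.send ti) →
    S[j]? = some (Constraint.send tj) → i < j → α i < α j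
  maps : ∀ (i : ℕ) (t : Term), S[i]? = some (Constraint.send t) →
    D[α i]? = some (Step.recv (t.subst σ))
  surj : ∀ (j : ℕ) (u : Term), D[j]? = some (Step.recv u) →
    ∃ i t, S[i]? = some (Constraint.send t) ∧ α i = j

/-- Position in `D` of the first reception strictly after the reception
corresponding (via `α`) to the last send constraint `≤ i` of `S` (or the first
reception of `D` if there is no such send): this is `Next(D, α(prev(i)))`. -/
noncomputable def cutoff (S : CSystem) (D : List Step) (α : ℕ → ℕ) (i : ℕ) : ℕ :=
  match prevSend S i with
  | none => nextRecv D 0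
  | some p => nextRecv D (α p + 1)

/-- `D, σ, α ⊢ S`: the derivation `D` is a proof of `σ ⊨ S`. -/
structure IsProof (DS : DeductionSystem) (S : CSystem) (σ : Subst)
    (D : List Step) (α : ℕ → ℕ) : Prop where
  deriv : IsDerivation DS D
  compliant : Compliant S σ D α
  recv_proved : ∀ (i : ℕ) (t : Term), S[i]? = some (Constraint.recv t) →
    ∃ j < cutoff S D α i, ∃ s, D[j]? = some s ∧ s.rhs = t.subst σ
  neg_not_mem : ∀ (i : ℕ) (t : Term), S[i]? = some (Constraint.neg t) →
    t.subst σ ∉ Der DS (knowledge S σ i)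

/-! ### Subterm deduction systems -/

/-- A composition rule: `x₁,…,xₙ → f(x₁,…,xₙ)` with pairwise distinct
variables `xᵢ`. -/
def IsCompRule (p : List Term × Term) : Prop :=
  ∃ (f : ℕ) (xs : List ℕ), xs.Nodup ∧ p.1 = xs.map Term.var ∧
    p.2 = Term.func f (xs.map Term.var)

/-- A decomposition rule: the right-hand side is a subterm of a left-hand
side. -/
def IsDecompRule (p : List Term × Term) : Prop :=
  ∃ l ∈ p.1, p.2 ∈ l.sub

/-- A subterm deduction system: every standard rule is a composition or a
decomposition rule. -/
def SubtermSystem (DS : DeductionSystem) : Prop :=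
  ∀ p ∈ DS.rules, IsCompRule p ∨ IsDecompRule p

/-- A step is a composition: a reception, a nonce creation, or an instance of
a composition rule of `DS`. -/
def IsCompositionStep (DS : DeductionSystem) (s : Step) : Prop :=
  match s with
  | .recv _ => True
  | .std l r =>
      (l = [] ∧ ∃ n, r = Term.nonce n) ∨
        ∃ p ∈ DS.rules, IsCompRule p ∧
          ∃ σ : Subst, l = p.1.map (Term.subst σ) ∧ r = p.2.subst σ

/-- `l → r` is an instance (not necessarily ground) of a standard deduction
rule of the system. -/
def StdRuleInstance (DS : DeductionSystem) (l : List Term) (r : Term) : Prop :=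
  (l = [] ∧ ∃ n, r = Term.nonce n) ∨
    ∃ p ∈ DS.rules, ∃ σ : Subst, l = p.1.map (Term.subst σ) ∧ r = p.2.subst σ

/-- DAG size of a rule. -/
noncomputable def ruleSize (p : List Term × Term) : ℕ :=
  sizeT ({p.2} ∪ {u | u ∈ p.1})

/-- Maximal size of a decomposition rule of the system. -/
noncomputable def maxDecompSize (DS : DeductionSystem) : ℕ :=
  sSup {n | ∃ p ∈ DS.rules, IsDecompRule p ∧ ruleSize p = n}

/-! ### Localization -/

/-- `T` localizes the derivation `D` for `σ`. -/
def Localizes (DS : DeductionSystem) (T : Set Term) (σ : Subst) (D : List Step) : Prop :=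
  ∀ (i : ℕ) (l : List Term) (r : Term), D[i]? = some (Step.std l r) →
    ∀ t ∈ subT T, ¬ t.IsVar → t.subst σ = r →
      ∃ ts : List Term, (∀ u ∈ ts, u ∈ subT T) ∧
        (∀ u ∈ ts, u.subst σ ∈ RHSset D i) ∧ StdRuleInstance DS ts t

/-- `T` one-to-one localizes `D` for `σ`. -/
def OneToOneLocalizes (DS : DeductionSystem) (T : Set Term) (σ : Subst)
    (D : List Step) : Prop :=
  Localizes DS T σ D ∧ Set.InjOn (Term.subst σ) (subT T)

/-! ### Terms of a derivation, `Out(S)` -/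

/-- The terms occurring in a derivation. -/
def derTerms (D : List Step) : Set Term := {t | ∃ s ∈ D, t ∈ s.terms}

/-- `Sub(D)`. -/
def subD (D : List Step) : Set Term := subT (derTerms D)

/-- The terms of the send constraints of `S`. -/
def outTerms (S : CSystem) : Set Term := {t | Constraint.send t ∈ S}

/-! ### Milestone sequences -/

/-- An element of a milestone sequence: `→ t` or `? → t`. -/
inductive MStep
  | ded : Term → MStep
  | recvm : Term → MStep

/-- The term of a milestone element. -/
def MStep.term : MStep → Term
  | ded t => t
  | recvm t => t

/-- `M` is a milestone candidate sequence of `D` for `(T,σ)`. -/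
def IsMilestoneOf (T : Set Term) (σ : Subst) (D : List Step) (M : List MStep) : Prop :=
  (∀ m ∈ M, m.term ∈ subT T) ∧
  ∃ α : ℕ → ℕ, (∀ i j, i < j → j < M.length → α i < α j) ∧
    ∀ (i : ℕ) (m : MStep), M[i]? = some m →
      match m with
      | MStep.recvm t => D[α i]? = some (Step.recv (t.subst σ))
      | MStep.ded t => ∃ l, D[α i]? = some (Step.std l (t.subst σ))

/-- `M` is the `(T,σ)`-milestone sequence of `D`: a candidate of maximal
length. -/
def IsMilestoneSeq (T : Set Term) (σ : Subst) (D : List Step) (M : List MStep) : Prop :=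
  IsMilestoneOf T σ D M ∧ ∀ M', IsMilestoneOf T σ D M' → M'.length ≤ M.length

/-! ### Free pairing symbol -/

/-- `f` occurs in the rule `p`. -/
def OccursInRule (f : ℕ) (p : List Term × Term) : Prop :=
  (∃ t ∈ p.1, t.OccursFun f) ∨ p.2.OccursFun f

/-- The system contains a composition rule `x₁, x₂ → f(x₁,x₂)` where the
binary symbol `f` occurs in no other rule. -/
def FreePairing (DS : DeductionSystem) : Prop :=
  ∃ (f x₁ x₂ : ℕ), x₁ ≠ x₂ ∧
    ([Term.var x₁, Term.var x₂], Term.func f [Term.var x₁, Term.var x₂]) ∈ DS.rules ∧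
    ∀ p ∈ DS.rules, OccursInRule f p →
      p = ([Term.var x₁, Term.var x₂], Term.func f [Term.var x₁, Term.var x₂])

/-! ### Unification -/

/-- `σ` is a unifier of the unification system `U`. -/
def IsUnifier (U : Set (Term × Term)) (σ : Subst) : Prop :=
  ∀ pq ∈ U, Term.subst σ pq.1 = Term.subst σ pq.2

/-- `θ` is a most general unifier of `U`. -/
def IsMGU (U : Set (Term × Term)) (θ : Subst) : Prop :=
  IsUnifier U θ ∧ ∀ σ, IsUnifier U σ → ∃ τ : Subst, ∀ x, σ x = (θ x).subst τ

/-- The terms of a unification system. -/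
def unifTerms (U : Set (Term × Term)) : Set Term :=
  {t | ∃ pq ∈ U, t = pq.1 ∨ t = pq.2}

/-- The variables of a unification system. -/
def unifVars (U : Set (Term × Term)) : Set ℕ := varsT (unifTerms U)
/-! ### Auxiliary lemmas for Lemma 6 -/

namespace MGUAux

open Term

/-- Structural induction principle for `Term`. -/
theorem term_ind {P : Term → Prop} (hv : ∀ x, P (var x)) (hc : ∀ c, P (cst c))
    (hn : ∀ n, P (nonce n)) (hf : ∀ f args, (∀ a ∈ args, P a) → P (func f args)) :
    ∀ t, P t := by
  have main : ∀ n t, sizeOf t ≤ n → P t := by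
    intro n
    induction n with
    | zero =>
      intro t h
      cases t <;> simp_all
    | succ n ih =>
      intro t h
      cases t with
      | var x => exact hv x
      | cst c => exact hc c
      | nonce m => exact hn m
      | func f args =>
        refine hf f args (fun a ha => ih a ?_)
        have := List.sizeOf_lt_of_mem ha
        simp only [Term.func.sizeOf_spec] at h
        omega
  exact fun t => main (sizeOf t) t le_rfl

theorem subst_func (σ : Subst) (f : ℕ) (args : List Term) :
    (func f args).subst σ = func f (args.map (Term.subst σ)) := by
  rw [Term.subst]
  simp [List.attach_map_val]

theorem subst_var (σ : Subst) (x : ℕ) : (var x).subst σ = σ x := by rw [Term.subst]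
theorem subst_cst (σ : Subst) (c : ℕ) : (cst c).subst σ = cst c := by rw [Term.subst]
theorem subst_nonce (σ : Subst) (n : ℕ) : (nonce n).subst σ = nonce n := by rw [Term.subst]

theorem map_eq_self {α : Type} {f : α → α} :
    ∀ {l : List α}, l.map f = l → ∀ x ∈ l, f x = x := by
  intro l
  induction l with
  | nil => intro _ x hx; cases hx
  | cons a l ih =>
    intro h x hx
    simp only [List.map_cons, List.cons.injEq] at h
    cases hx with
    | head => exact h.1
    | tail _ hx => exact ih h.2 x hx

theorem map_self_of {α : Type} {f : α → α} :
    ∀ {l : List α}, (∀ x ∈ l, f x = x) → l.map f = l := by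
  intro l
  induction l with
  | nil => intro _; rfl
  | cons a l ih =>
    intro h
    simp only [List.map_cons]
    rw [h a (List.mem_cons_self), ih (fun x hx => h x (List.mem_cons_of_mem _ hx))]

open Classical in
/-- Replace every occurrence of the subterm `p` by the variable `z`. -/
noncomputable def repl (p : Term) (z : ℕ) : Term → Term := fun t =>
  if t = p then Term.var z else
    match t with
    | func f args => func f (args.attach.map (fun a => repl p z a.1))
    | t => t
decreasing_by
  have := List.sizeOf_lt_of_mem a.2
  simp only [Term.func.sizeOf_spec]
  omega

theorem repl_self (p : Term) (z : ℕ) : repl p z p = var z := by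
  rw [repl.eq_def, if_pos rfl]

theorem repl_var {p : Term} {x : ℕ} (z : ℕ) (h : var x ≠ p) :
    repl p z (var x) = var x := by
  rw [repl.eq_def, if_neg h]

theorem repl_cst {p : Term} {c : ℕ} (z : ℕ) (h : cst c ≠ p) :
    repl p z (cst c) = cst c := by
  rw [repl.eq_def, if_neg h]

theorem repl_nonce {p : Term} {n : ℕ} (z : ℕ) (h : nonce n ≠ p) :
    repl p z (nonce n) = nonce n := by
  rw [repl.eq_def, if_neg h]

theorem repl_func {p : Term} {f : ℕ} {args : List Term} (z : ℕ) (h : func f args ≠ p) :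
    repl p z (func f args) = func f (args.map (repl p z)) := by
  rw [repl.eq_def, if_neg h]
  simp [List.attach_map_val]

/-- If a term is fixed by `θ`, then `θ` fixes all its variables. -/
theorem fix_vars {θ : Subst} {s t : Term} (hsub : IsSubterm s t) :
    ∀ y, s = var y → t.subst θ = t → θ y = var y := by
  induction hsub with
  | refl =>
    intro y hy ht
    subst hy
    rwa [subst_var] at ht
  | func hmem hsb ih =>
    intro y hy ht
    rw [subst_func] at ht
    injection ht with _ hmap
    exact ih y hy (map_eq_self hmap _ hmem)

/-- A substitution fixing all variables of `t` fixes `t`. -/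
theorem subst_fix (σ : Subst) :
    ∀ t, (∀ y, IsSubterm (var y) t → σ y = var y) → t.subst σ = t := by
  refine term_ind ?_ ?_ ?_ ?_
  · intro x h
    rw [subst_var]
    exact h x (IsSubterm.refl _)
  · intro c _; rw [subst_cst]
  · intro n _; rw [subst_nonce]
  · intro f args ih h
    rw [subst_func]
    congr 1
    exact map_self_of (fun a ha => ih a ha (fun y hy => h y (IsSubterm.func ha hy)))

/-- Key commutation: if no subterm of `s` is mapped by `θ` onto `p`, then
replacing `p` after applying `θ` is the same as applying the modified
substitution. -/
theorem repl_subst (θ : Subst) (p : Term) (z : ℕ) :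
    ∀ s, (∀ q, IsSubterm q s → q.subst θ ≠ p) →
      repl p z (s.subst θ) = s.subst (fun x => repl p z (θ x)) := by
  refine term_ind ?_ ?_ ?_ ?_
  · intro x _
    rw [subst_var, subst_var]
  · intro c h
    rw [subst_cst, subst_cst]
    have := h _ (IsSubterm.refl (cst c))
    rw [subst_cst] at this
    rw [repl_cst z this]
  · intro n h
    rw [subst_nonce, subst_nonce]
    have := h _ (IsSubterm.refl (nonce n))
    rw [subst_nonce] at this
    rw [repl_nonce z this]
  · intro f args ih h
    have hne := h _ (IsSubterm.refl (func f args))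
    rw [subst_func] at hne ⊢
    rw [subst_func, repl_func z hne]
    simp only [List.map_map]
    congr 1
    refine List.map_congr_left (fun a ha => ?_)
    exact ih a ha (fun q hq => h q (IsSubterm.func ha hq))

/-- After replacing an actual subterm `p` by `z`, the variable `z` occurs. -/
theorem var_mem_repl {p t : Term} (z : ℕ) (h : IsSubterm p t) :
    IsSubterm (var z) (repl p z t) := by
  induction h with
  | refl =>
    rw [repl_self]
    exact IsSubterm.refl _
  | func hmem hsb ih =>
    rename_i t f args
    by_cases hp : func f args = p
    · rw [hp, repl_self]
      exact IsSubterm.refl _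
    · rw [repl_func z hp]
      exact IsSubterm.func (List.mem_map_of_mem hmem) ih

/-- The set of variables of a term is finite. -/
theorem varsSet_finite : ∀ t : Term, (Term.varsSet t).Finite := by
  refine term_ind ?_ ?_ ?_ ?_
  · intro x
    refine Set.Finite.subset (Set.finite_singleton x) ?_
    intro y hy
    cases hy with
    | refl => rfl
  · intro c
    refine Set.Finite.subset (Set.finite_empty) ?_
    intro y hy
    cases hy
  · intro n
    refine Set.Finite.subset (Set.finite_empty) ?_
    intro y hy
    cases hy
  · intro f args ih
    have hsub : Term.varsSet (func f args) ⊆ ⋃ a ∈ {u | u ∈ args}, Term.varsSet a := by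
      intro y hy
      cases hy with
      | func hmem hsb => exact Set.mem_biUnion hmem hsb
    exact Set.Finite.subset (Set.Finite.biUnion (List.finite_toSet args) (fun a ha => ih a ha)) hsub

end MGUAux

/-- Lemma 6: every subterm of the image of an idempotent mgu `θ` of `U` with
`vars(img(θ)) ⊆ vars(U)` is the `θ`-instance of a subterm of `U`. -/
theorem mgu_subterms (U : Set (Term × Term)) (hU : U.Finite)
    (θ : Subst) (hθ : θ.Idem) (hmgu : IsMGU U θ)
    (hv : varsT θ.img ⊆ unifVars U) :
    ∀ p ∈ subT θ.img, ∃ q ∈ subT (unifTerms U), p = q.subst θ := by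
  classical
  open MGUAux Term in
  intro p hp
  by_contra hcon
  push_neg at hcon
  -- `p` is not a `θ`-instance of any subterm of `U`
  have K : ∀ q, q ∈ subT (unifTerms U) → q.subst θ ≠ p :=
    fun q hq h => (hcon q hq) h.symm
  obtain ⟨t, ht, hpt⟩ := hp
  obtain ⟨x₀, _, rfl⟩ := ht
  -- choose a variable `z` fresh for `θ x₀`
  obtain ⟨z, hz⟩ := ((varsSet_finite (θ x₀)).infinite_compl).nonempty
  set σ : Subst := fun x => repl p z (θ x) with hσ
  -- `σ` is a unifier of `U`
  have hunif : IsUnifier U σ := by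
    intro pq hpq
    have h1 : pq.1 ∈ unifTerms U := ⟨pq, hpq, Or.inl rfl⟩
    have h2 : pq.2 ∈ unifTerms U := ⟨pq, hpq, Or.inr rfl⟩
    have e1 := repl_subst θ p z pq.1
      (fun q hq => K q ⟨pq.1, h1, hq⟩)
    have e2 := repl_subst θ p z pq.2
      (fun q hq => K q ⟨pq.2, h2, hq⟩)
    rw [hσ, ← e1, ← e2, hmgu.1 pq hpq]
  obtain ⟨τ, hτ⟩ := hmgu.2 σ hunif
  -- `τ` fixes every variable of `θ x₀`
  have hfix : ∀ y, IsSubterm (var y) (θ x₀) → τ y = var y := by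
    intro y hy
    have hyv : y ∈ varsT θ.img := ⟨θ x₀, ⟨x₀, ‹_›, rfl⟩, hy⟩
    have hyU : y ∈ unifVars U := hv hyv
    obtain ⟨u, huU, hyu⟩ := hyU
    have hvarU : (var y) ∈ subT (unifTerms U) := ⟨u, huU, hyu⟩
    have hθy : θ y = var y := fix_vars hy y rfl (hθ x₀)
    have hpy : var y ≠ p := by
      have := K (var y) hvarU
      rwa [subst_var, hθy] at this
    have h1 : σ y = τ y := by
      have := hτ y
      rwa [hθy, subst_var] at this
    have h2 : σ y = var y := by
      show repl p z (θ y) = var y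
      rw [hθy, repl_var z hpy]
    rw [← h1, h2]
  -- hence `σ x₀ = θ x₀`, but `z` occurs in `σ x₀`
  have hfixed : (θ x₀).subst τ = θ x₀ := subst_fix τ _ hfix
  have hσx₀ : σ x₀ = θ x₀ := by rw [hτ x₀, hfixed]
  have hzmem : IsSubterm (var z) (σ x₀) := var_mem_repl z hpt
  rw [hσx₀] at hzmem
  exact hz hzmem
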